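/- Let s, q ∈ ℝᵐ with s_{m−1}, q_{m−1} ≥ 0, and let s', q' ∈ ℝ^{m−1} be obtained by replacing the last two coordinates of s and q by the single coordinate √(s_{m−1}² + s_m²) and √(q_{m−1}² + q_m²) respectively. Define g_k(x,y) = √(Σ_{i=1}^{k−1}(xᵢ−yᵢ)² + (x_k+y_k)²) on ℝᵏ. Then g_{m−1}(s', q') ≥ g_m(s, q). -/
import Mathlib


/-- Condition 2 of the n-Simplex Distance Constraint: collapsing the last two
coordinates (sp, sm) of an apex to the single coordinate √(sp²+sm²) (with
sp, qp ≥ 0) does not decrease the upper-bound function g.  Here `a`, `b` are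
the first m−2 coordinates of s and q, `sp`, `qp` the penultimate coordinates
and `sm`, `qm` the last coordinates. -/
theorem upper_bound_antitone (k : ℕ) (a b : Fin k → ℝ) (sp sm qp qm : ℝ)
    (hsp : 0 ≤ sp) (hqp : 0 ≤ qp) :
    Real.sqrt (∑ i : Fin k, (a i - b i)^2 + (sp - qp)^2 + (sm + qm)^2) ≤
      Real.sqrt (∑ i : Fin k, (a i - b i)^2 +
        (Real.sqrt (sp^2 + sm^2) + Real.sqrt (qp^2 + qm^2))^2) := by
  apply Real.sqrt_le_sqrt
  have hu : (Real.sqrt (sp^2 + sm^2))^2 = sp^2 + sm^2 :=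
    Real.sq_sqrt (by positivity)
  have hv : (Real.sqrt (qp^2 + qm^2))^2 = qp^2 + qm^2 :=
    Real.sq_sqrt (by positivity)
  have hu1 : |sm| ≤ Real.sqrt (sp^2 + sm^2) := by
    rw [← Real.sqrt_sq_eq_abs]
    exact Real.sqrt_le_sqrt (by nlinarith)
  have hv1 : |qm| ≤ Real.sqrt (qp^2 + qm^2) := by
    rw [← Real.sqrt_sq_eq_abs]
    exact Real.sqrt_le_sqrt (by nlinarith)
  have h1 : sm * qm ≤ |sm| * |qm| := by
    rw [← abs_mul]; exact le_abs_self _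
  have hun : 0 ≤ Real.sqrt (sp^2 + sm^2) := Real.sqrt_nonneg _
  have hvn : 0 ≤ Real.sqrt (qp^2 + qm^2) := Real.sqrt_nonneg _
  nlinarith [mul_le_mul hu1 hv1 (abs_nonneg qm) hun, mul_nonneg hsp hqp,
    abs_nonneg sm, abs_nonneg qm]
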